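/- Let n ≥ 2 and θ ∈ ℝ. The function Φ_θ, defined on 𝔹 by the power series Φ_θ(x) := ∑_{k=0}^∞ [(-θ)_k (n/2-1-θ)_k / ((n/2)_k (1)_k)] |x|^{2k} (which converges for |x| < 1), satisfies L_θ[Φ_θ] = 0 on 𝔹. -/

import Mathlib

open MeasureTheory
open scoped BigOperators ENNReal Classical

noncomputable section

/-- Euclidean space `ℝⁿ`. -/
abbrev E (n : ℕ) := EuclideanSpace ℝ (Fin n)

/-- The open unit ball of `ℝⁿ`. -/
def unitBall (n : ℕ) : Set (E n) := Metric.ball 0 1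

/-- The Laplacian `Δf = ∑ ∂²f/∂xᵢ²`. -/
def lap {n : ℕ} (f : E n → ℂ) (x : E n) : ℂ :=
  ∑ i : Fin n,
    fderiv ℝ (fun y => fderiv ℝ f y (EuclideanSpace.single i 1)) x (EuclideanSpace.single i 1)

/-- The `N`-th iterate `Δ^N` of the Laplacian. -/
def lapIter {n : ℕ} (N : ℕ) (f : E n → ℂ) : E n → ℂ := lap^[N] f

/-- The radial derivative `R[u](x) = x ⋅ ∇u(x)`. -/
def radialDeriv {n : ℕ} (f : E n → ℂ) (x : E n) : ℂ := fderiv ℝ f x x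

/-- The operator `L_θ[u] = (1-|x|²) Δu + 4θ R[u] + 2θ(n-2-2θ) u`. -/
def Lop {n : ℕ} (θ : ℝ) (f : E n → ℂ) (x : E n) : ℂ :=
  ((1 - ‖x‖ ^ 2 : ℝ) : ℂ) * lap f x + ((4 * θ : ℝ) : ℂ) * radialDeriv f x
    + ((2 * θ * ((n : ℝ) - 2 - 2 * θ) : ℝ) : ℂ) * f x

/-- The multiplication operator `M^j[u](x) = (1-|x|²)^j u(x)` for integer `j`. -/
def Mnat {n : ℕ} (j : ℕ) (f : E n → ℂ) (x : E n) : ℂ :=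
  (((1 - ‖x‖ ^ 2) ^ j : ℝ) : ℂ) * f x

/-- The multiplication operator `M^λ[u](x) = (1-|x|²)^λ u(x)` for real `λ`. -/
def Mr {n : ℕ} (lam : ℝ) (f : E n → ℂ) (x : E n) : ℂ :=
  (((1 - ‖x‖ ^ 2) ^ lam : ℝ) : ℂ) * f x

/-- `u` is `N`-harmonic on the unit ball: `u` is `C^{2N}` there and `Δ^N u = 0`. -/
def NHarm (n N : ℕ) (u : E n → ℂ) : Prop :=
  ContDiffOn ℝ (2 * N : ℕ) u (unitBall n) ∧ ∀ x ∈ unitBall n, lapIter N u x = 0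

/-- `‖u‖_{p,α}^p = ∫_𝔹 |u|^p (1-|x|²)^α dV`, as a lower integral. -/
def wInt (n : ℕ) (p α : ℝ) (u : E n → ℂ) : ℝ≥0∞ :=
  ∫⁻ x in unitBall n, ENNReal.ofReal (‖u x‖ ^ p * (1 - ‖x‖ ^ 2) ^ α)

/-- Membership in `PH^p_{N,α}(𝔹)`. -/
def memPH (n N : ℕ) (p α : ℝ) (u : E n → ℂ) : Prop :=
  NHarm n N u ∧ wInt n p α u < ⊤

/-- The quantities `b_{j,N}(p)`. -/
def bCoef (n N j : ℕ) (p : ℝ) : ℝ :=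
  if j = 0 then -1 - ((N : ℝ) - 1) * p
  else max (-1 - ((N : ℝ) + (j : ℝ) - 1) * p) (-(n : ℝ) - ((N : ℝ) - (j : ℝ) - (n : ℝ) + 1) * p)

/-- The quantities `a_{j,N}(p)`. -/
def aCoef (n N j : ℕ) (p : ℝ) : ℝ :=
  min (bCoef n N j p) (-1 - ((N : ℝ) - (j : ℝ)) * p)

end

/-- The radial hypergeometric function
`Φ_θ(x) = ₂F₁(-θ, n/2-1-θ; n/2; |x|²)`, given by its power series. -/
noncomputable def Phi (n : ℕ) (θ : ℝ) (x : E n) : ℝ :=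
  ∑' k : ℕ,
    ((ascPochhammer ℝ k).eval (-θ) * (ascPochhammer ℝ k).eval ((n : ℝ) / 2 - 1 - θ)) /
        ((ascPochhammer ℝ k).eval ((n : ℝ) / 2) * (ascPochhammer ℝ k).eval 1) *
      ‖x‖ ^ (2 * k)

namespace Stmt10Aux

open Filter Topology

/-- `a` is summable against `r^k` for every `0 ≤ r < 1`. -/
def Summ (a : ℕ → ℝ) : Prop := ∀ r : ℝ, 0 ≤ r → r < 1 → Summable fun k => |a k| * r ^ k

lemma Summ.summable {a : ℕ → ℝ} (h : Summ a) {t : ℝ} (ht : |t| < 1) :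
    Summable fun k => a k * t ^ k := by
  refine Summable.of_norm_bounded (h |t| (abs_nonneg t) ht) fun k => ?_
  rw [Real.norm_eq_abs, abs_mul, abs_pow]

lemma Summ.of_abs_le {a b : ℕ → ℝ} (hb : Summ b) (h : ∀ k, |a k| ≤ |b k|) : Summ a := by
  intro r hr0 hr1
  refine Summable.of_nonneg_of_le (fun k => by positivity) (fun k => ?_) (hb r hr0 hr1)
  exact mul_le_mul_of_nonneg_right (h k) (by positivity)

lemma Summ.add {a b : ℕ → ℝ} (ha : Summ a) (hb : Summ b) : Summ fun k => a k + b k := by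
  intro r hr0 hr1
  refine Summable.of_nonneg_of_le (fun k => by positivity) (fun k => ?_)
    ((ha r hr0 hr1).add (hb r hr0 hr1))
  have : |a k + b k| ≤ |a k| + |b k| := abs_add_le _ _
  nlinarith [pow_nonneg hr0 k, abs_nonneg (a k), abs_nonneg (b k)]

lemma Summ.const_mul {a : ℕ → ℝ} (ha : Summ a) (C : ℝ) : Summ fun k => C * a k := by
  intro r hr0 hr1
  refine Summable.congr (((ha r hr0 hr1).mul_left |C|)) fun k => ?_
  rw [abs_mul]; ring

lemma Summ.succ {a : ℕ → ℝ} (h : Summ a) : Summ fun k => a (k + 1) := by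
  intro r hr0 hr1
  rcases eq_or_lt_of_le hr0 with hr | hr
  · apply summable_of_ne_finset_zero (s := {0})
    intro k hk
    have hk' : k ≠ 0 := by simpa using hk
    rw [← hr, zero_pow hk', mul_zero]
  · have h1 : Summable fun k => |a (k + 1)| * r ^ (k + 1) :=
      (summable_nat_add_iff 1).2 (h r hr0 hr1)
    refine Summable.congr (h1.mul_right r⁻¹) fun k => ?_
    rw [pow_succ]
    field_simp

lemma Summ.mul_nat {a : ℕ → ℝ} (h : Summ a) : Summ fun k => (k : ℝ) * a k := by
  intro r hr0 hr1
  set s : ℝ := (r + 1) / 2 with hs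
  have hs0 : 0 < s := by simp only [hs]; linarith
  have hrs : r < s := by simp only [hs]; linarith
  have hs1 : s < 1 := by simp only [hs]; linarith
  have hq1 : r / s < 1 := (div_lt_one hs0).2 hrs
  have hq0 : 0 ≤ r / s := by positivity
  have hsum : Summable fun k : ℕ => (k : ℝ) * (r / s) ^ k := by
    have := summable_pow_mul_geometric_of_norm_lt_one (R := ℝ) 1
      (r := r / s) (by rwa [Real.norm_eq_abs, abs_of_nonneg hq0])
    simpa using this
  have htend : Tendsto (fun k : ℕ => (k : ℝ) * (r / s) ^ k) atTop (𝓝 0) :=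
    hsum.tendsto_atTop_zero
  have hev : ∀ᶠ k : ℕ in atTop, (k : ℝ) * (r / s) ^ k ≤ 1 :=
    htend.eventually_le_const one_pos
  refine Summable.of_norm_bounded_eventually_nat
    (h s hs0.le hs1) ?_
  filter_upwards [hev] with k hk
  rw [Real.norm_eq_abs, abs_of_nonneg (by positivity)]
  have hsk : 0 < s ^ k := pow_pos hs0 k
  have h1 : (k : ℝ) * r ^ k ≤ s ^ k := by
    have h2 := mul_le_mul_of_nonneg_right hk hsk.le
    rw [div_pow, one_mul] at h2
    have h3 : (k : ℝ) * (r ^ k / s ^ k) * s ^ k = (k : ℝ) * r ^ k := by field_simp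
    rw [h3] at h2
    exact h2
  calc |(k : ℝ) * a k| * r ^ k = |a k| * ((k : ℝ) * r ^ k) := by
        rw [abs_mul, Nat.abs_cast]; ring
  _ ≤ |a k| * s ^ k := by
        exact mul_le_mul_of_nonneg_left h1 (abs_nonneg _)

lemma Summ.shift {a : ℕ → ℝ} (h : Summ a) : Summ fun k => ((k : ℝ) + 1) * a (k + 1) := by
  have h1 : Summ fun k => (k : ℝ) * a (k + 1) := h.succ.mul_nat
  have h2 : Summ fun k => a (k + 1) := h.succ
  exact (h1.add h2).of_abs_le fun k => by rw [add_mul, one_mul]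

/-- Termwise differentiation of a power series with `Summ` coefficients. -/
lemma hasDerivAt_tsum_pow {a : ℕ → ℝ} (ha : Summ a) {t : ℝ} (ht : |t| < 1) :
    HasDerivAt (fun y : ℝ => ∑' k : ℕ, a k * y ^ k)
      (∑' k : ℕ, ((k : ℝ) + 1) * a (k + 1) * t ^ k) t := by
  set r : ℝ := (|t| + 1) / 2 with hrdef
  have h0t : 0 ≤ |t| := abs_nonneg t
  have hr0 : 0 < r := by simp only [hrdef]; linarith
  have htr : |t| < r := by simp only [hrdef]; linarith
  have hr1 : r < 1 := by simp only [hrdef]; linarith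
  set u : ℕ → ℝ := fun k => |a k| * ((k : ℝ) * r ^ (k - 1)) with hu_def
  have hu : Summable u := by
    rw [← summable_nat_add_iff 1]
    refine Summable.congr (ha.shift r hr0.le hr1) fun k => ?_
    simp only [hu_def, Nat.add_sub_cancel]
    rw [abs_mul]
    have : |(k : ℝ) + 1| = (k : ℝ) + 1 := abs_of_nonneg (by positivity)
    rw [this]
    push_cast
    ring
  have hg : ∀ (k : ℕ) (y : ℝ), y ∈ Metric.ball (0 : ℝ) r →
      HasDerivAt (fun z : ℝ => a k * z ^ k) (a k * ((k : ℝ) * y ^ (k - 1))) y :=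
    fun k y _ => (hasDerivAt_pow k y).const_mul (a k)
  have hg' : ∀ (k : ℕ) (y : ℝ), y ∈ Metric.ball (0 : ℝ) r →
      ‖a k * ((k : ℝ) * y ^ (k - 1))‖ ≤ u k := by
    intro k y hy
    rw [Metric.mem_ball, Real.dist_eq, sub_zero] at hy
    rw [Real.norm_eq_abs, abs_mul, abs_mul, abs_pow, Nat.abs_cast, hu_def]
    have : |y| ^ (k - 1) ≤ r ^ (k - 1) := pow_le_pow_left₀ (abs_nonneg y) hy.le _
    have hk0 : (0:ℝ) ≤ (k : ℝ) := Nat.cast_nonneg k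
    calc |a k| * ((k:ℝ) * |y| ^ (k-1)) ≤ |a k| * ((k:ℝ) * r ^ (k-1)) := by
          apply mul_le_mul_of_nonneg_left _ (abs_nonneg _)
          exact mul_le_mul_of_nonneg_left this hk0
    _ = u k := rfl
  have hmem : t ∈ Metric.ball (0 : ℝ) r := by
    rw [Metric.mem_ball, Real.dist_eq, sub_zero]; exact htr
  have hD := hasDerivAt_tsum_of_isPreconnected hu Metric.isOpen_ball
    (convex_ball (0:ℝ) r).isPreconnected hg hg' hmem (ha.summable ht) hmem
  have hsum2 : Summable fun k => a k * ((k : ℝ) * t ^ (k - 1)) := by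
    refine Summable.of_norm_bounded hu fun k => hg' k t hmem
  have : (∑' k : ℕ, a k * ((k : ℝ) * t ^ (k - 1)))
      = ∑' k : ℕ, ((k : ℝ) + 1) * a (k + 1) * t ^ k := by
    rw [Summable.tsum_eq_zero_add hsum2]
    simp only [Nat.cast_zero, zero_mul, mul_zero, zero_add]
    refine tsum_congr fun k => ?_
    rw [Nat.add_sub_cancel]
    push_cast
    ring
  rwa [this] at hD

/-- The hypergeometric coefficients. -/
noncomputable def hgc (n : ℕ) (θ : ℝ) (k : ℕ) : ℝ :=
  ((ascPochhammer ℝ k).eval (-θ) * (ascPochhammer ℝ k).eval ((n : ℝ) / 2 - 1 - θ)) /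
    ((ascPochhammer ℝ k).eval ((n : ℝ) / 2) * (ascPochhammer ℝ k).eval 1)

lemma half_pos' {n : ℕ} (hn : 2 ≤ n) : (0:ℝ) < (n : ℝ) / 2 := by
  have : (2:ℝ) ≤ (n:ℝ) := by exact_mod_cast hn
  linarith

lemma hgc_rec {n : ℕ} (hn : 2 ≤ n) (θ : ℝ) (k : ℕ) :
    hgc n θ (k + 1) * (((k : ℝ) + 1) * ((n : ℝ) / 2 + k)) =
      hgc n θ k * ((-θ + k) * ((n : ℝ) / 2 - 1 - θ + k)) := by
  have h1 : 0 < (ascPochhammer ℝ k).eval ((n : ℝ) / 2) :=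
    ascPochhammer_pos k _ (half_pos' hn)
  have h2 : 0 < (ascPochhammer ℝ k).eval (1 : ℝ) := ascPochhammer_pos k _ one_pos
  have h3 : 0 < (n : ℝ) / 2 + k := by have := half_pos' hn; positivity
  simp only [hgc, ascPochhammer_succ_eval]
  field_simp
  ring

lemma hgc_succ {n : ℕ} (hn : 2 ≤ n) (θ : ℝ) (k : ℕ) :
    hgc n θ (k + 1) = hgc n θ k *
      (((-θ + k) * ((n : ℝ) / 2 - 1 - θ + k)) / (((k : ℝ) + 1) * ((n : ℝ) / 2 + k))) := by
  have h3 : 0 < (n : ℝ) / 2 + k := by have := half_pos' hn; positivity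
  have hne : (((k : ℝ) + 1) * ((n : ℝ) / 2 + k)) ≠ 0 := by positivity
  rw [mul_div_assoc', eq_div_iff hne]
  linear_combination hgc_rec hn θ k

lemma tendsto_ratio {n : ℕ} (hn : 2 ≤ n) (θ : ℝ) :
    Tendsto (fun k : ℕ => ((-θ + k) * ((n : ℝ) / 2 - 1 - θ + k)) /
      (((k : ℝ) + 1) * ((n : ℝ) / 2 + k))) atTop (𝓝 1) := by
  have hc := half_pos' hn
  have heq : ∀ k : ℕ, ((-θ + k) * ((n : ℝ) / 2 - 1 - θ + k)) /
      (((k : ℝ) + 1) * ((n : ℝ) / 2 + k)) =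
      (1 + (-θ - 1) / ((k : ℝ) + 1)) * (1 + (-1 - θ) / ((n : ℝ) / 2 + k)) := by
    intro k
    have h3 : (0:ℝ) < (n : ℝ) / 2 + k := by positivity
    have h4 : (0:ℝ) < (k : ℝ) + 1 := by positivity
    field_simp
    ring
  simp only [heq]
  have hat1 : Tendsto (fun k : ℕ => (k : ℝ) + 1) atTop atTop :=
    tendsto_atTop_add_const_right _ 1 tendsto_natCast_atTop_atTop
  have hat2 : Tendsto (fun k : ℕ => (n : ℝ) / 2 + (k : ℝ)) atTop atTop :=
    tendsto_atTop_add_const_left _ _ tendsto_natCast_atTop_atTop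
  have t1 : Tendsto (fun k : ℕ => (-θ - 1) / ((k : ℝ) + 1)) atTop (𝓝 0) :=
    Tendsto.div_atTop tendsto_const_nhds hat1
  have t2 : Tendsto (fun k : ℕ => (-1 - θ) / ((n : ℝ) / 2 + k)) atTop (𝓝 0) :=
    Tendsto.div_atTop tendsto_const_nhds hat2
  have := ((tendsto_const_nhds (x := (1:ℝ)) (f := atTop)).add t1).mul
    ((tendsto_const_nhds (x := (1:ℝ)) (f := atTop)).add t2)
  simpa using this

lemma summ_hgc {n : ℕ} (hn : 2 ≤ n) (θ : ℝ) : Summ (hgc n θ) := by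
  intro r hr0 hr1
  set l : ℝ := (r + 1) / 2 with hl
  have hrl : r < l := by simp only [hl]; linarith
  have hl1 : l < 1 := by simp only [hl]; linarith
  have hl0 : 0 < l := by simp only [hl]; linarith
  refine summable_of_ratio_norm_eventually_le hl1 ?_
  set Q : ℕ → ℝ := fun k => ((-θ + k) * ((n : ℝ) / 2 - 1 - θ + k)) /
      (((k : ℝ) + 1) * ((n : ℝ) / 2 + k)) with hQ
  have habs : Tendsto (fun k : ℕ => |Q k| * r) atTop (𝓝 (|1| * r)) :=
    ((tendsto_ratio hn θ).abs).mul_const r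
  have hev : ∀ᶠ k : ℕ in atTop, |Q k| * r ≤ l := by
    refine habs.eventually_le_const ?_
    rw [abs_one, one_mul]; exact hrl
  filter_upwards [hev] with k hk
  have e1 : |hgc n θ (k + 1)| = |hgc n θ k| * |Q k| := by
    rw [hgc_succ hn θ k, abs_mul]
  have h0 : 0 ≤ |hgc n θ k| * r ^ k := by positivity
  rw [Real.norm_eq_abs, Real.norm_eq_abs, abs_mul, abs_mul, abs_abs, abs_abs,
    abs_pow, abs_pow, abs_of_nonneg hr0, e1, pow_succ]
  calc |hgc n θ k| * |Q k| * (r ^ k * r)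
      = (|hgc n θ k| * r ^ k) * (|Q k| * r) := by ring
    _ ≤ (|hgc n θ k| * r ^ k) * l := mul_le_mul_of_nonneg_left hk h0
    _ = l * (|hgc n θ k| * r ^ k) := mul_comm _ _

/-- Shift operator on coefficient sequences. -/
noncomputable def sh (a : ℕ → ℝ) : ℕ → ℝ := fun k => ((k : ℝ) + 1) * a (k + 1)

lemma Summ.sh' {a : ℕ → ℝ} (h : Summ a) : Summ (sh a) := h.shift

/-- The key hypergeometric ODE identity. -/
lemma key {n : ℕ} (hn : 2 ≤ n) (θ : ℝ) {t : ℝ} (ht : |t| < 1) :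
    (1 - t) * (4 * t * (∑' k : ℕ, sh (sh (hgc n θ)) k * t ^ k)
        + 2 * (n : ℝ) * (∑' k : ℕ, sh (hgc n θ) k * t ^ k))
      + 8 * θ * t * (∑' k : ℕ, sh (hgc n θ) k * t ^ k)
      + 2 * θ * ((n : ℝ) - 2 - 2 * θ) * (∑' k : ℕ, hgc n θ k * t ^ k) = 0 := by
  set c : ℕ → ℝ := hgc n θ with hc_def
  set d : ℕ → ℝ := sh c with hd_def
  set e : ℕ → ℝ := sh d with he_def
  have hc : Summ c := summ_hgc hn θ
  have hd : Summ d := hc.sh'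
  have he : Summ e := hd.sh'
  have hv : Summ fun k => (k : ℝ) * ((k : ℝ) - 1) * c k := by
    have h1 : Summ fun k => (k : ℝ) * c k := hc.mul_nat
    have h2 : Summ fun k => (k : ℝ) * ((k : ℝ) * c k) := h1.mul_nat
    have h3 : Summ fun k => (-1 : ℝ) * ((k : ℝ) * c k) := h1.const_mul (-1)
    refine (h2.add h3).of_abs_le fun k => le_of_eq (congrArg abs (by ring))
  -- summable sequences at t
  have hSc : Summable fun k : ℕ => c k * t ^ k := hc.summable ht
  have hSd : Summable fun k : ℕ => d k * t ^ k := hd.summable ht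
  have hSe : Summable fun k : ℕ => e k * t ^ k := he.summable ht
  have hW : Summable fun k : ℕ => ((k : ℝ) * d k) * t ^ k := hd.mul_nat.summable ht
  have hX : Summable fun k : ℕ => ((k : ℝ) * c k) * t ^ k := hc.mul_nat.summable ht
  have hV : Summable fun k : ℕ => ((k : ℝ) * ((k : ℝ) - 1) * c k) * t ^ k := hv.summable ht
  -- shifting identities
  have A1 : t * (∑' k : ℕ, e k * t ^ k) = ∑' k : ℕ, ((k : ℝ) * d k) * t ^ k := by
    rw [← tsum_mul_left, Summable.tsum_eq_zero_add hW]
    simp only [Nat.cast_zero, zero_mul, zero_add]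
    refine tsum_congr fun k => ?_
    simp only [hd_def, he_def, sh]
    push_cast
    ring
  have A2 : t ^ 2 * (∑' k : ℕ, e k * t ^ k)
      = ∑' k : ℕ, ((k : ℝ) * ((k : ℝ) - 1) * c k) * t ^ k := by
    rw [← tsum_mul_left, Summable.tsum_eq_zero_add hV, Summable.tsum_eq_zero_add ((summable_nat_add_iff 1).2 hV)]
    simp only [Nat.cast_zero, Nat.cast_one, zero_mul, mul_zero, sub_self, zero_add, mul_one,
      one_mul]
    refine tsum_congr fun k => ?_
    simp only [hd_def, he_def, sh]
    push_cast
    ring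
  have A3 : t * (∑' k : ℕ, d k * t ^ k) = ∑' k : ℕ, ((k : ℝ) * c k) * t ^ k := by
    rw [← tsum_mul_left, Summable.tsum_eq_zero_add hX]
    simp only [Nat.cast_zero, zero_mul, zero_add]
    refine tsum_congr fun k => ?_
    simp only [hd_def, sh]
    push_cast
    ring
  set K : ℝ := 2 * θ * ((n : ℝ) - 2 - 2 * θ) with hK
  set S1 : ℝ := ∑' k : ℕ, ((k : ℝ) * d k) * t ^ k
  set S2 : ℝ := ∑' k : ℕ, ((k : ℝ) * ((k : ℝ) - 1) * c k) * t ^ k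
  set S3 : ℝ := ∑' k : ℕ, ((k : ℝ) * c k) * t ^ k
  set S4 : ℝ := ∑' k : ℕ, d k * t ^ k
  set S5 : ℝ := ∑' k : ℕ, c k * t ^ k
  have Htot : HasSum (fun k : ℕ =>
      4 * (((k : ℝ) * d k) * t ^ k) - 4 * (((k : ℝ) * ((k : ℝ) - 1) * c k) * t ^ k)
        + 2 * (n : ℝ) * (d k * t ^ k) - 2 * (n : ℝ) * (((k : ℝ) * c k) * t ^ k)
        + 8 * θ * (((k : ℝ) * c k) * t ^ k) + K * (c k * t ^ k))
      (4 * S1 - 4 * S2 + 2 * (n : ℝ) * S4 - 2 * (n : ℝ) * S3 + 8 * θ * S3 + K * S5) :=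
    (((((hW.hasSum.mul_left 4).sub (hV.hasSum.mul_left 4)).add
      (hSd.hasSum.mul_left (2 * (n : ℝ)))).sub (hX.hasSum.mul_left (2 * (n : ℝ)))).add
      (hX.hasSum.mul_left (8 * θ))).add (hSc.hasSum.mul_left K)
  have hzero : ∀ k : ℕ,
      4 * (((k : ℝ) * d k) * t ^ k) - 4 * (((k : ℝ) * ((k : ℝ) - 1) * c k) * t ^ k)
        + 2 * (n : ℝ) * (d k * t ^ k) - 2 * (n : ℝ) * (((k : ℝ) * c k) * t ^ k)
        + 8 * θ * (((k : ℝ) * c k) * t ^ k) + K * (c k * t ^ k) = 0 := by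
    intro k
    simp only [hd_def, sh, hc_def, hK]
    linear_combination (4 * t ^ k : ℝ) * hgc_rec hn θ k
  have h0 : (4 * S1 - 4 * S2 + 2 * (n : ℝ) * S4 - 2 * (n : ℝ) * S3 + 8 * θ * S3 + K * S5) = 0 := by
    have := (funext hzero : _) ▸ Htot
    exact this.unique hasSum_zero
  calc (1 - t) * (4 * t * (∑' k : ℕ, e k * t ^ k) + 2 * (n : ℝ) * S4)
        + 8 * θ * t * S4 + K * S5
      = 4 * (t * (∑' k : ℕ, e k * t ^ k)) - 4 * (t ^ 2 * (∑' k : ℕ, e k * t ^ k))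
        + 2 * (n : ℝ) * S4 - 2 * (n : ℝ) * (t * S4) + 8 * θ * (t * S4) + K * S5 := by ring
    _ = 4 * S1 - 4 * S2 + 2 * (n : ℝ) * S4 - 2 * (n : ℝ) * S3 + 8 * θ * S3 + K * S5 := by
        rw [A1, A2, A3]
    _ = 0 := h0

lemma abs_sq_lt_one {n : ℕ} {z : E n} (hz : ‖z‖ < 1) : |‖z‖ ^ 2| < 1 := by
  rw [abs_of_nonneg (by positivity)]
  exact pow_lt_one₀ (norm_nonneg z) hz two_ne_zero

/-- Derivative of a radial power series composed with `ofReal`. -/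
lemma hasFDerivAt_radial {n : ℕ} {a : ℕ → ℝ} (ha : Summ a) {y : E n} (hy : ‖y‖ < 1) :
    HasFDerivAt (fun z : E n => ((∑' k : ℕ, a k * (‖z‖ ^ 2) ^ k : ℝ) : ℂ))
      (Complex.ofRealCLM.comp
        ((∑' k : ℕ, sh a k * (‖y‖ ^ 2) ^ k) • ((2:ℝ) • (innerSL ℝ y)))) y := by
  have ht : |‖y‖ ^ 2| < 1 := abs_sq_lt_one hy
  have hq : HasFDerivAt (fun z : E n => ‖z‖ ^ 2) ((2:ℝ) • innerSL ℝ y) y := by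
    have h := (hasStrictFDerivAt_norm_sq y).hasFDerivAt
    have h2 : ((2:ℕ) • innerSL ℝ y : E n →L[ℝ] ℝ) = (2:ℝ) • innerSL ℝ y := by
      ext v; simp [two_smul]
    rwa [h2] at h
  have hF : HasDerivAt (fun s : ℝ => ∑' k : ℕ, a k * s ^ k)
      (∑' k : ℕ, sh a k * (‖y‖ ^ 2) ^ k) (‖y‖ ^ 2) := hasDerivAt_tsum_pow ha ht
  have h1 : HasFDerivAt (fun z : E n => (∑' k : ℕ, a k * (‖z‖ ^ 2) ^ k : ℝ))
      ((∑' k : ℕ, sh a k * (‖y‖ ^ 2) ^ k) • ((2:ℝ) • innerSL ℝ y)) y :=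
    by have := hF.comp_hasFDerivAt y hq; exact this
  exact Complex.ofRealCLM.hasFDerivAt.comp y h1

end Stmt10Aux

open Stmt10Aux

/-- `Φ_θ` solves `L_θ[u] = 0` on the unit ball. -/
theorem stmt10 (n : ℕ) (hn : 2 ≤ n) (θ : ℝ) :
    ∀ x ∈ unitBall n, Lop θ (fun y => ((Phi n θ y : ℝ) : ℂ)) x = 0 := by
  intro x hx
  have hx1 : ‖x‖ < 1 := by simpa [unitBall, mem_ball_zero_iff] using hx
  have hc : Summ (hgc n θ) := summ_hgc hn θ
  have hd : Summ (sh (hgc n θ)) := hc.sh'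
  have hPhi : (fun y : E n => ((Phi n θ y : ℝ) : ℂ))
      = fun z : E n => ((∑' k : ℕ, hgc n θ k * (‖z‖ ^ 2) ^ k : ℝ) : ℂ) := by
    funext z
    congr 1
    refine tsum_congr fun k => ?_
    rw [pow_mul]
    rfl
  rw [hPhi]
  set U := fun z : E n => ((∑' k : ℕ, hgc n θ k * (‖z‖ ^ 2) ^ k : ℝ) : ℂ) with hU_def
  have hDU : ∀ z : E n, ‖z‖ < 1 → HasFDerivAt U
      (Complex.ofRealCLM.comp
        ((∑' k : ℕ, sh (hgc n θ) k * (‖z‖ ^ 2) ^ k) • ((2:ℝ) • (innerSL ℝ z)))) z :=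
    fun z hz => hasFDerivAt_radial hc hz
  set t : ℝ := ‖x‖ ^ 2 with ht_def
  have habs : |t| < 1 := abs_sq_lt_one hx1
  set F0 : ℝ := ∑' k : ℕ, hgc n θ k * t ^ k with hF0
  set F1 : ℝ := ∑' k : ℕ, sh (hgc n θ) k * t ^ k with hF1
  set F2 : ℝ := ∑' k : ℕ, sh (sh (hgc n θ)) k * t ^ k with hF2
  -- the Laplacian
  have hsum_sq : ∑ i : Fin n, x i ^ 2 = t := by
    rw [ht_def, EuclideanSpace.norm_eq, Real.sq_sqrt (by positivity)]
    exact Finset.sum_congr rfl fun i _ => by rw [Real.norm_eq_abs, sq_abs]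
  have hlap : lap U x = ((2 * n * F1 + 4 * t * F2 : ℝ) : ℂ) := by
    rw [lap]
    have hterm : ∀ i : Fin n,
        fderiv ℝ (fun y => fderiv ℝ U y (EuclideanSpace.single i 1)) x
          (EuclideanSpace.single i 1) = ((2 * F1 + 4 * (x i) ^ 2 * F2 : ℝ) : ℂ) := by
      intro i
      set g1 := fun z : E n => ((∑' k : ℕ, sh (hgc n θ) k * (‖z‖ ^ 2) ^ k : ℝ) : ℂ) with hg1_def
      set g2 := fun z : E n => ((2 * z i : ℝ) : ℂ) with hg2_def
      have hev : (fun y => fderiv ℝ U y (EuclideanSpace.single i 1))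
          =ᶠ[nhds x] fun y => g1 y * g2 y := by
        filter_upwards [Metric.isOpen_ball.mem_nhds
          (show x ∈ Metric.ball (0 : E n) 1 from mem_ball_zero_iff.2 hx1)] with y hy
        rw [(hDU y (mem_ball_zero_iff.1 hy)).fderiv]
        simp only [ContinuousLinearMap.coe_comp', Function.comp_apply,
          ContinuousLinearMap.smul_apply, ContinuousLinearMap.coe_smul', Pi.smul_apply,
          innerSL_apply_apply, smul_eq_mul, Complex.ofRealCLM_apply, hg1_def, hg2_def]
        rw [EuclideanSpace.inner_single_right]
        simp only [starRingEnd_apply, star_trivial, one_mul]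
        push_cast
        ring
      rw [hev.fderiv_eq]
      have hg1' : HasFDerivAt g1
          (Complex.ofRealCLM.comp
            ((∑' k : ℕ, sh (sh (hgc n θ)) k * (‖x‖ ^ 2) ^ k) • ((2:ℝ) • (innerSL ℝ x)))) x :=
        hasFDerivAt_radial hd hx1
      have hg2' : HasFDerivAt g2
          (Complex.ofRealCLM.comp ((2:ℝ) • innerSL ℝ (EuclideanSpace.single i (1 : ℝ)))) x := by
        have hfun : g2 = fun z : E n =>
            (Complex.ofRealCLM.comp ((2:ℝ) • innerSL ℝ (EuclideanSpace.single i (1 : ℝ)))) z := by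
          funext z
          simp only [hg2_def, ContinuousLinearMap.coe_comp', Function.comp_apply,
            ContinuousLinearMap.coe_smul', Pi.smul_apply, innerSL_apply_apply, smul_eq_mul,
            nsmul_eq_mul, Complex.ofRealCLM_apply]
          rw [EuclideanSpace.inner_single_left]
          simp only [starRingEnd_apply, star_trivial, one_mul]
        rw [hfun]
        exact (Complex.ofRealCLM.comp _).hasFDerivAt
      rw [show (fun y => g1 y * g2 y) = g1 * g2 from rfl, (hg1'.mul hg2').fderiv]
      simp only [ContinuousLinearMap.add_apply, ContinuousLinearMap.smul_apply,
        ContinuousLinearMap.coe_comp', Function.comp_apply, ContinuousLinearMap.coe_smul',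
        Pi.smul_apply, innerSL_apply_apply, smul_eq_mul, Complex.ofRealCLM_apply,
        hg1_def, hg2_def, EuclideanSpace.inner_single_right, starRingEnd_apply, star_trivial,
        EuclideanSpace.single_apply, eq_self_iff_true, if_true, one_mul, mul_one]
      rw [← ht_def, ← hF1, ← hF2]
      push_cast
      ring
    rw [Finset.sum_congr rfl fun i _ => hterm i]
    rw [show (∑ i : Fin n, ((2 * F1 + 4 * (x i) ^ 2 * F2 : ℝ) : ℂ))
        = (((∑ i : Fin n, (2 * F1 + 4 * (x i) ^ 2 * F2) : ℝ)) : ℂ) from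
      (Complex.ofReal_sum _ _).symm]
    congr 1
    rw [Finset.sum_add_distrib, Finset.sum_const, Finset.card_univ, Fintype.card_fin,
      ← Finset.sum_mul, ← Finset.mul_sum, hsum_sq]
    ring
  -- the radial derivative
  have hrad : radialDeriv U x = ((F1 * (2 * t) : ℝ) : ℂ) := by
    rw [radialDeriv, (hDU x hx1).fderiv]
    simp only [ContinuousLinearMap.coe_comp', Function.comp_apply,
      ContinuousLinearMap.smul_apply, ContinuousLinearMap.coe_smul', Pi.smul_apply,
      innerSL_apply_apply, smul_eq_mul, Complex.ofRealCLM_apply]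
    rw [real_inner_self_eq_norm_sq, ← ht_def, ← hF1]
  have hUx : U x = ((F0 : ℝ) : ℂ) := rfl
  rw [Lop, hlap, hrad, hUx, ← ht_def]
  rw [← Complex.ofReal_mul, ← Complex.ofReal_mul, ← Complex.ofReal_mul, ← Complex.ofReal_add,
    ← Complex.ofReal_add, Complex.ofReal_eq_zero]
  linear_combination key hn θ habs
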